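/- (Onsager reciprocal relation L₁₂ = L₂₁ for cylindrical electrokinetics.) Let a, μ, ε > 0 and ze ∈ ℝ. Let φ : [0,a] → ℝ be C² with φ(a) = 0, and let q : [0,a] → ℝ be continuous and satisfy the radial Poisson equation −ε( φ''(r) + φ'(r)/r ) = ze q(r) for r ∈ (0,a) (q represents the net charge density p − n). Define the cross coefficients L₁₂ := (1/(2μa²)) ∫₀^a r · ze q(r) · (a² − r²) dr and L₂₁ := (2ε/(μa²)) ∫₀^a φ(r) r dr. Then L₁₂ = L₂₁; i.e., the linear response matrix relating the electric current density J_e and fluid flux J_f to the driving forces (E_z, −∂Π/∂z) is symmetric. -/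

import Mathlib

open Set intervalIntegral

/-- **Onsager reciprocal relation `L₁₂ = L₂₁` for cylindrical electrokinetics.**
With the radial Poisson equation `−ε(φ'' + φ'/r) = ze q(r)` on `(0,a)` and `φ(a) = 0`,
the cross coefficients
`L₁₂ = (1/(2μa²)) ∫₀^a r (ze q(r)) (a² − r²) dr` and
`L₂₁ = (2ε/(μa²)) ∫₀^a φ(r) r dr`
of the linear response matrix are equal: the matrix relating `(J_e, J_f)` to
`(E_z, −∂Π/∂z)` is symmetric. -/
theorem onsager_reciprocal_relation_cylindrical
    (a μ ε : ℝ) (ha : 0 < a) (hμ : 0 < μ) (hε : 0 < ε) (ze : ℝ)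
    (φ : ℝ → ℝ) (hφ : ContDiffOn ℝ 2 φ (Icc 0 a)) (hφa : φ a = 0)
    (q : ℝ → ℝ) (hq : ContinuousOn q (Icc 0 a))
    (hPoisson : ∀ r ∈ Ioo (0 : ℝ) a,
      -(ε * (deriv (deriv φ) r + deriv φ r / r)) = ze * q r) :
    (1 / (2 * μ * a ^ 2)) * ∫ r in (0 : ℝ)..a, r * (ze * q r) * (a ^ 2 - r ^ 2)
      = (2 * ε / (μ * a ^ 2)) * ∫ r in (0 : ℝ)..a, φ r * r := by
  have hsU : UniqueDiffOn ℝ (Icc (0:ℝ) a) := uniqueDiffOn_Icc ha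
  set ψ : ℝ → ℝ := derivWithin φ (Icc 0 a) with hψdef
  have hψcd : ContDiffOn ℝ 1 ψ (Icc 0 a) := hφ.derivWithin hsU (by norm_num)
  set ψ₂ : ℝ → ℝ := derivWithin ψ (Icc 0 a) with hψ₂def
  have hψ₂cd : ContDiffOn ℝ 0 ψ₂ (Icc 0 a) := hψcd.derivWithin hsU (by norm_num)
  have hψ₂c : ContinuousOn ψ₂ (Icc 0 a) := hψ₂cd.continuousOn
  have hψc : ContinuousOn ψ (Icc 0 a) := hψcd.continuousOn
  have hφc : ContinuousOn φ (Icc 0 a) := hφ.continuousOn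
  have hφd : ∀ r ∈ Ioo (0:ℝ) a, HasDerivAt φ (ψ r) r := fun r hr =>
    ((hφ.differentiableOn (by norm_num) r
      (Ioo_subset_Icc_self hr)).hasDerivWithinAt).hasDerivAt
      (Icc_mem_nhds hr.1 hr.2)
  have hψd : ∀ r ∈ Ioo (0:ℝ) a, HasDerivAt ψ (ψ₂ r) r := fun r hr =>
    ((hψcd.differentiableOn (by norm_num) r
      (Ioo_subset_Icc_self hr)).hasDerivWithinAt).hasDerivAt
      (Icc_mem_nhds hr.1 hr.2)
  set H : ℝ → ℝ := fun r => (a^2 - r^2) * r * ψ r + 2 * r^2 * φ r with hHdef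
  set F : ℝ → ℝ := fun r => (a^2 - r^2) * (ψ r + r * ψ₂ r) + 4 * r * φ r with hFdef
  -- H' = F on the interior
  have hHd : ∀ r ∈ Ioo (0:ℝ) a, HasDerivAt H (F r) r := by
    intro r hr
    have h1 : HasDerivAt (fun r : ℝ => (a^2 - r^2) * r * ψ r)
        ((-2*r) * r * ψ r + (a^2 - r^2) * (1 * ψ r + r * ψ₂ r)) r := by
      have hmul : HasDerivAt (fun r : ℝ => r * ψ r) (1 * ψ r + r * ψ₂ r) r :=
        (hasDerivAt_id r).mul (hψd r hr)
      have hpoly : HasDerivAt (fun r : ℝ => a^2 - r^2) (-2*r) r := by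
        have := ((hasDerivAt_pow 2 r).const_sub (a^2))
        simpa [mul_comm] using this
      simpa [mul_assoc, Pi.mul_def] using hpoly.mul hmul
    have h2 : HasDerivAt (fun r : ℝ => 2 * r^2 * φ r)
        (2 * (2*r) * φ r + 2 * r^2 * ψ r) r := by
      have hpoly : HasDerivAt (fun r : ℝ => 2 * r^2) (2 * (2*r)) r := by
        simpa [mul_comm, mul_assoc] using (hasDerivAt_pow 2 r).const_mul (2:ℝ)
      simpa [Pi.mul_def] using hpoly.mul (hφd r hr)
    have : HasDerivAt H _ r := h1.add h2
    convert this using 1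
    simp only [hFdef]
    ring
  -- the integrand identity on the interior
  have hkey : ∀ r ∈ Ioo (0:ℝ) a,
      r * (ze * q r) * (a ^ 2 - r ^ 2) = (-ε) * F r + (4*ε) * (φ r * r) := by
    intro r hr
    have hr0 : r ≠ 0 := ne_of_gt hr.1
    have hd1 : deriv φ r = ψ r := (hφd r hr).deriv
    have heq : deriv φ =ᶠ[nhds r] ψ := by
      filter_upwards [Ioo_mem_nhds hr.1 hr.2] with x hx
      exact (hφd x hx).deriv
    have hd2 : deriv (deriv φ) r = ψ₂ r := by
      rw [Filter.EventuallyEq.deriv_eq heq]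
      exact (hψd r hr).deriv
    have hp := hPoisson r hr
    rw [hd1, hd2] at hp
    rw [← hp]
    simp only [hFdef]
    field_simp
    ring
  have huIcc : uIcc (0:ℝ) a = Icc 0 a := uIcc_of_le ha.le
  -- integrability
  have hFint : IntervalIntegrable F MeasureTheory.volume 0 a := by
    apply ContinuousOn.intervalIntegrable
    rw [huIcc]
    exact ((continuousOn_const.sub (continuousOn_pow 2)).mul
      (hψc.add (continuousOn_id.mul hψ₂c))).add
      ((continuousOn_const.mul continuousOn_id).mul hφc)
  have hφrint : IntervalIntegrable (fun r => φ r * r) MeasureTheory.volume 0 a := by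
    apply ContinuousOn.intervalIntegrable
    rw [huIcc]
    exact hφc.mul continuousOn_id
  -- the left integral equals the right-hand combination
  have hcongr : (∫ r in (0:ℝ)..a, r * (ze * q r) * (a ^ 2 - r ^ 2))
      = ∫ r in (0:ℝ)..a, ((-ε) * F r + (4*ε) * (φ r * r)) := by
    apply intervalIntegral.integral_congr_ae
    have h1 : ∀ᵐ x : ℝ ∂MeasureTheory.volume, x ≠ a := by
      refine MeasureTheory.ae_iff.mpr ?_
      simpa using MeasureTheory.measure_singleton (a : ℝ)
    filter_upwards [h1] with x hx hmem
    rw [uIoc_of_le ha.le] at hmem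
    exact hkey x ⟨hmem.1, lt_of_le_of_ne hmem.2 hx⟩
  -- FTC: ∫ F = H a - H 0 = 0
  have hHcont : ContinuousOn H (Icc 0 a) := by
    exact (((continuousOn_const.sub (continuousOn_pow 2)).mul continuousOn_id).mul hψc).add
      ((continuousOn_const.mul (continuousOn_pow 2)).mul hφc)
  have hFTC : (∫ r in (0:ℝ)..a, F r) = H a - H 0 :=
    intervalIntegral.integral_eq_sub_of_hasDerivAt_of_le ha.le hHcont hHd hFint
  have hH0 : H 0 = 0 := by simp [hHdef]
  have hHa : H a = 0 := by simp [hHdef, hφa]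
  have hsplit : (∫ r in (0:ℝ)..a, ((-ε) * F r + (4*ε) * (φ r * r)))
      = (-ε) * (∫ r in (0:ℝ)..a, F r) + (4*ε) * ∫ r in (0:ℝ)..a, φ r * r := by
    rw [intervalIntegral.integral_add (hFint.const_mul _) (hφrint.const_mul _),
      intervalIntegral.integral_const_mul, intervalIntegral.integral_const_mul]
  rw [hcongr, hsplit, hFTC, hH0, hHa]
  have ha' : a ≠ 0 := ne_of_gt ha
  have hμ' : μ ≠ 0 := ne_of_gt hμ
  field_simp
  ring
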